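/- Let r > 0, n ≥ 2 be an integer, and t ∈ (0,1). Then the sum over all integers j not in the interval (-n, n] of e^{-(t-j)²/r²} is strictly less than (r²/(n-1)) e^{-(n-1)²/r²}. -/

import Mathlib

open Real MeasureTheory

noncomputable def eNeg (n : ℤ) : ℕ ≃ {j : ℤ // j ≤ -n} where
  toFun k := ⟨-n - k, by omega⟩
  invFun j := (-n - j.1).toNat
  left_inv k := by show (-n - (-n - (k:ℤ))).toNat = k; omega
  right_inv j := by
    have := j.2
    ext
    show -n - ((-n - j.1).toNat : ℤ) = j.1
    omega

noncomputable def ePos (n : ℤ) : ℕ ≃ {j : ℤ // n < j} where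
  toFun k := ⟨n + 1 + k, by omega⟩
  invFun j := (j.1 - n - 1).toNat
  left_inv k := by show (n + 1 + (k:ℤ) - n - 1).toNat = k; omega
  right_inv j := by
    have := j.2
    ext
    show n + 1 + ((j.1 - n - 1).toNat : ℤ) = j.1
    omega

set_option maxHeartbeats 1000000 in
theorem discrete_gaussian_tail (r : ℝ) (hr : 0 < r) (n : ℤ) (hn : 2 ≤ n)
    (t : ℝ) (ht : t ∈ Set.Ioo (0 : ℝ) 1) :
    ∑' j : {j : ℤ // j ≤ -n ∨ n < j}, Real.exp (-(t - (j : ℤ)) ^ 2 / r ^ 2)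
      < r ^ 2 / ((n : ℝ) - 1) * Real.exp (-((n : ℝ) - 1) ^ 2 / r ^ 2) := by
  obtain ⟨ht0, ht1⟩ := ht
  have hn' : (2:ℝ) ≤ (n:ℝ) := by exact_mod_cast hn
  set a : ℝ := (n : ℝ) - 1 with ha_def
  have ha : 1 ≤ a := by simp only [ha_def]; linarith
  have ha0 : 0 < a := by linarith
  have hr2 : 0 < r ^ 2 := by positivity
  set x : ℝ := 2 * a / r ^ 2 with hx_def
  have hx : 0 < x := by positivity
  set q : ℝ := Real.exp (-x) with hq_def
  have hq0 : 0 < q := Real.exp_pos _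
  have hq1 : q < 1 := by
    rw [hq_def, Real.exp_lt_one_iff]; linarith
  set C : ℝ := Real.exp (-a ^ 2 / r ^ 2) with hC_def
  have hC0 : 0 < C := Real.exp_pos _
  -- key pointwise bound
  have key : ∀ (k : ℕ) (u : ℝ), a + 1 + k ≤ u → Real.exp (-u ^ 2 / r ^ 2) ≤ C * q ^ (k + 1) := by
    intro k u hu
    have hk0 : (0:ℝ) ≤ k := Nat.cast_nonneg k
    have h1 : a ^ 2 + 2 * a * (k + 1) ≤ u ^ 2 := by nlinarith
    have h2 : Real.exp (-u ^ 2 / r ^ 2) ≤ Real.exp (-(a ^ 2 + 2 * a * (k + 1)) / r ^ 2) := by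
      apply Real.exp_le_exp.mpr
      apply div_le_div_of_nonneg_right ?_ hr2.le
      linarith
    refine h2.trans_eq ?_
    have h3 : -(a ^ 2 + 2 * a * (k + 1)) / r ^ 2 = -a ^ 2 / r ^ 2 + ((k + 1 : ℕ) : ℝ) * (-x) := by
      rw [hx_def]
      push_cast
      field_simp
      ring
    rw [h3, Real.exp_add, Real.exp_nat_mul, hC_def, hq_def]
  -- geometric series
  have hgeo : Summable (fun k : ℕ => C * q ^ (k + 1)) := by
    simpa [pow_succ, mul_comm, mul_left_comm, mul_assoc] using
      ((summable_geometric_of_lt_one hq0.le hq1).mul_left (C * q))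
  have hgeo_sum : ∑' k : ℕ, C * q ^ (k + 1) = C * q * (1 - q)⁻¹ := by
    have h : (fun k : ℕ => C * q ^ (k + 1)) = fun k : ℕ => (C * q) * q ^ k := by
      funext k; ring
    rw [h, tsum_mul_left, tsum_geometric_of_lt_one hq0.le hq1]
  -- bounds for the two pieces
  have hfneg : ∀ k : ℕ,
      Real.exp (-(t - (((eNeg n k : {j : ℤ // j ≤ -n}) : ℤ) : ℝ)) ^ 2 / r ^ 2) ≤ C * q ^ (k + 1) := by
    intro k
    have h : (((eNeg n k : {j : ℤ // j ≤ -n}) : ℤ) : ℝ) = -(n:ℝ) - k := by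
      show (((-n - (k:ℤ)) : ℤ) : ℝ) = _
      push_cast; ring
    rw [h, show -(t - (-(n:ℝ) - (k:ℕ))) ^ 2 / r ^ 2 = -(t + (n:ℝ) + (k:ℕ)) ^ 2 / r ^ 2 from by ring]
    exact key k _ (by push_cast; linarith)
  have hfpos : ∀ k : ℕ,
      Real.exp (-(t - (((ePos n k : {j : ℤ // n < j}) : ℤ) : ℝ)) ^ 2 / r ^ 2) ≤ C * q ^ (k + 1) := by
    intro k
    have h : (((ePos n k : {j : ℤ // n < j}) : ℤ) : ℝ) = (n:ℝ) + 1 + k := by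
      show (((n + 1 + (k:ℤ)) : ℤ) : ℝ) = _
      push_cast; ring
    rw [h, show -(t - ((n:ℝ) + 1 + (k:ℕ))) ^ 2 / r ^ 2 = -((n:ℝ) + 1 + (k:ℕ) - t) ^ 2 / r ^ 2 from by ring]
    exact key k _ (by push_cast; linarith)
  -- summability
  have hsneg : Summable (fun j : {j : ℤ // j ≤ -n} => Real.exp (-(t - ((j : ℤ) : ℝ)) ^ 2 / r ^ 2)) := by
    apply ((eNeg n).summable_iff
      (f := fun j : {j : ℤ // j ≤ -n} => Real.exp (-(t - ((j : ℤ) : ℝ)) ^ 2 / r ^ 2))).mp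
    exact Summable.of_nonneg_of_le (fun k => (Real.exp_pos _).le) hfneg hgeo
  have hspos : Summable (fun j : {j : ℤ // n < j} => Real.exp (-(t - ((j : ℤ) : ℝ)) ^ 2 / r ^ 2)) := by
    apply ((ePos n).summable_iff
      (f := fun j : {j : ℤ // n < j} => Real.exp (-(t - ((j : ℤ) : ℝ)) ^ 2 / r ^ 2))).mp
    exact Summable.of_nonneg_of_le (fun k => (Real.exp_pos _).le) hfpos hgeo
  -- split the sum
  have hd : Disjoint {j : ℤ | j ≤ -n} {j : ℤ | n < j} := by
    rw [Set.disjoint_left]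
    intro j hj1 hj2
    simp only [Set.mem_setOf_eq] at hj1 hj2
    omega
  have hsplit : (∑' j : {j : ℤ // j ≤ -n ∨ n < j}, Real.exp (-(t - ((j : ℤ) : ℝ)) ^ 2 / r ^ 2))
      = (∑' j : {j : ℤ // j ≤ -n}, Real.exp (-(t - ((j : ℤ) : ℝ)) ^ 2 / r ^ 2))
        + (∑' j : {j : ℤ // n < j}, Real.exp (-(t - ((j : ℤ) : ℝ)) ^ 2 / r ^ 2)) :=
    Summable.tsum_union_disjoint (f := fun j : ℤ => Real.exp (-(t - (j : ℝ)) ^ 2 / r ^ 2)) hd hsneg hspos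
  -- bound the two pieces
  have hb1 : (∑' j : {j : ℤ // j ≤ -n}, Real.exp (-(t - ((j : ℤ) : ℝ)) ^ 2 / r ^ 2))
      ≤ C * q * (1 - q)⁻¹ := by
    rw [← (eNeg n).tsum_eq (fun j : {j : ℤ // j ≤ -n} => Real.exp (-(t - ((j : ℤ) : ℝ)) ^ 2 / r ^ 2)),
      ← hgeo_sum]
    exact Summable.tsum_le_tsum hfneg ((eNeg n).summable_iff.mpr hsneg) hgeo
  have hb2 : (∑' j : {j : ℤ // n < j}, Real.exp (-(t - ((j : ℤ) : ℝ)) ^ 2 / r ^ 2))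
      ≤ C * q * (1 - q)⁻¹ := by
    rw [← (ePos n).tsum_eq (fun j : {j : ℤ // n < j} => Real.exp (-(t - ((j : ℤ) : ℝ)) ^ 2 / r ^ 2)),
      ← hgeo_sum]
    exact Summable.tsum_le_tsum hfpos ((ePos n).summable_iff.mpr hspos) hgeo
  -- final strict inequality
  have hE : x + 1 < Real.exp x := Real.add_one_lt_exp hx.ne'
  have h1q : 0 < 1 - q := by linarith
  have hqx : q * Real.exp x = 1 := by rw [hq_def, ← Real.exp_add]; simp
  have key2 : q * (1 - q)⁻¹ < 1 / x := by
    have h5 : q * (x + 1) < q * Real.exp x := mul_lt_mul_of_pos_left hE hq0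
    rw [hqx] at h5
    rw [← div_eq_mul_inv, div_lt_div_iff₀ h1q hx]
    nlinarith
  have hfin : C * q * (1 - q)⁻¹ + C * q * (1 - q)⁻¹ < r ^ 2 / a * C := by
    have h6 : 2 * C * (q * (1 - q)⁻¹) < 2 * C * (1 / x) :=
      mul_lt_mul_of_pos_left key2 (by positivity)
    have h7 : 2 * C * (1 / x) = r ^ 2 / a * C := by
      rw [hx_def]
      field_simp
    nlinarith
  calc (∑' j : {j : ℤ // j ≤ -n ∨ n < j}, Real.exp (-(t - ((j : ℤ) : ℝ)) ^ 2 / r ^ 2))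
      = _ + _ := hsplit
    _ ≤ C * q * (1 - q)⁻¹ + C * q * (1 - q)⁻¹ := add_le_add hb1 hb2
    _ < r ^ 2 / a * C := hfin
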